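/- arXiv:2205.13245 — 3 statements merged into one kernel-verified Lean document; each statement's English description precedes it below -/
import Mathlib

section
/- Let A be a real m×m matrix. There exists a sequence (P_k) of matrices in ℝ^{m×m} with det P_k = 1 for all k such that P_k⁻¹ A P_k converges to a diagonal matrix as k → ∞ if and only if every complex eigenvalue of A (every root in ℂ of the characteristic polynomial of A) is real. -/
open Matrix Filter Topology
open Polynomial


lemma eval_charpoly' {n : ℕ} (M : Matrix (Fin n) (Fin n) ℝ) (x : ℝ) :
    M.charpoly.eval x = (x • (1 : Matrix (Fin n) (Fin n) ℝ) - M).det := by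
  rw [Matrix.charpoly, ← Polynomial.coe_evalRingHom, RingHom.map_det]
  congr 1
  ext i j
  by_cases h : i = j
  · subst h; simp [Matrix.charmatrix_apply_eq, Matrix.one_apply]
  · simp [Matrix.charmatrix_apply_ne _ _ _ h, Matrix.one_apply, h]

lemma charpoly_similar {n : ℕ} (P A : Matrix (Fin n) (Fin n) ℝ) (h : IsUnit P.det) :
    (P⁻¹ * A * P).charpoly = A.charpoly := by
  have hP : P * P⁻¹ = 1 := mul_nonsing_inv P h
  have hP' : P⁻¹ * P = 1 := nonsing_inv_mul P h
  have hsc : ∀ B : Matrix (Fin n) (Fin n) ℝ[X],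
      B * Matrix.scalar (Fin n) (X : ℝ[X]) = Matrix.scalar (Fin n) (X : ℝ[X]) * B :=
    fun B => (Matrix.scalar_commute (X : ℝ[X]) (fun r => Commute.all _ r) B).symm
  have hmap : ∀ B B' : Matrix (Fin n) (Fin n) ℝ,
      (B * B').map (Polynomial.C : ℝ → ℝ[X]) = B.map Polynomial.C * B'.map Polynomial.C :=
    fun B B' => Matrix.map_mul
  have key : charmatrix (P⁻¹ * A * P)
      = (P⁻¹).map Polynomial.C * charmatrix A * P.map Polynomial.C := by
    rw [charmatrix, charmatrix, Matrix.mul_sub, Matrix.sub_mul]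
    congr 1
    · symm
      rw [hsc, mul_assoc, ← hmap, hP']
      simp
    · rw [RingHom.mapMatrix_apply, RingHom.mapMatrix_apply, hmap, hmap]
  have hdet1 : ((P⁻¹).map (Polynomial.C : ℝ → ℝ[X])).det * (P.map Polynomial.C).det = 1 := by
    rw [← det_mul, ← hmap, hP']
    simp
  rw [Matrix.charpoly, Matrix.charpoly, key, det_mul, det_mul, mul_comm, ← mul_assoc, mul_comm ((P.map Polynomial.C).det), hdet1, one_mul]


def HasOnlyRealEigenvalues {m : ℕ} (M : Matrix (Fin m) (Fin m) ℝ) : Prop :=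
  ∀ z : ℂ, (M.charpoly.map (algebraMap ℝ ℂ)).IsRoot z → z.im = 0

lemma exists_real_eigenvector {n : ℕ} (A : Matrix (Fin (n+1)) (Fin (n+1)) ℝ)
    (hA : HasOnlyRealEigenvalues A) :
    ∃ (x : ℝ) (v : Fin (n+1) → ℝ), v ≠ 0 ∧ A *ᵥ v = x • v := by
  have hmon : A.charpoly.Monic := A.charpoly_monic
  have hdeg : (A.charpoly.map (algebraMap ℝ ℂ)).degree ≠ 0 := by
    have h1 : (A.charpoly.map (algebraMap ℝ ℂ)).natDegree = n + 1 := by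
      rw [hmon.natDegree_map, A.charpoly_natDegree_eq_dim, Fintype.card_fin]
    have h2 : (A.charpoly.map (algebraMap ℝ ℂ)) ≠ 0 :=
      (hmon.map (algebraMap ℝ ℂ)).ne_zero
    intro hc
    rw [Polynomial.degree_eq_natDegree h2, h1] at hc
    exact_mod_cast hc
  obtain ⟨z, hz⟩ := IsAlgClosed.exists_root _ hdeg
  have him : z.im = 0 := hA z hz
  set x := z.re with hx
  have hz' : z = (x : ℂ) := Complex.ext rfl (by simp [him])
  have hev : A.charpoly.eval x = 0 := by
    have h3 : (A.charpoly.map (algebraMap ℝ ℂ)).eval ((algebraMap ℝ ℂ) x) = 0 := by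
      have : (algebraMap ℝ ℂ) x = z := by simp [hz']
      rw [this]; exact hz
    rw [Polynomial.eval_map, Polynomial.eval₂_at_apply] at h3
    exact (map_eq_zero_iff _ (algebraMap ℝ ℂ).injective).1 h3
  have hdet : (x • (1 : Matrix (Fin (n+1)) (Fin (n+1)) ℝ) - A).det = 0 := by
    rw [← eval_charpoly']; exact hev
  obtain ⟨v, hv0, hv⟩ := (Matrix.exists_mulVec_eq_zero_iff).2 hdet
  refine ⟨x, v, hv0, ?_⟩
  rw [Matrix.sub_mulVec, sub_eq_zero] at hv
  rw [← hv, Matrix.smul_mulVec, Matrix.one_mulVec]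

lemma exists_block_form {n : ℕ} (A : Matrix (Fin (n+1)) (Fin (n+1)) ℝ) (x : ℝ) (v : Fin (n+1) → ℝ)
    (hv0 : v ≠ 0) (hv : A *ᵥ v = x • v) :
    ∃ B : Matrix (Fin (n+1)) (Fin (n+1)) ℝ, IsUnit B.det ∧
      (B⁻¹ * A * B) 0 0 = x ∧ ∀ i : Fin n, (B⁻¹ * A * B) i.succ 0 = 0 := by
  obtain ⟨i₀, hi₀⟩ : ∃ i, v i ≠ 0 := by
    by_contra hc
    push_neg at hc
    exact hv0 (funext hc)
  set g : Fin (n+1) → Fin (n+1) → ℝ :=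
    Fin.cons v (fun j => Pi.single (i₀.succAbove j) 1) with hg
  set B : Matrix (Fin (n+1)) (Fin (n+1)) ℝ := Matrix.of (fun r c => g c r) with hB
  have hBcol0 : ∀ r, B r 0 = v r := fun r => rfl
  have hBcols : ∀ r (c : Fin n), B r c.succ = (Pi.single (i₀.succAbove c) (1:ℝ) : Fin (n+1) → ℝ) r :=
    fun r c => by simp [hB, hg]
  have hdetB : B.det = (-1) ^ (i₀ : ℕ) * v i₀ := by
    rw [Matrix.det_succ_column_zero, Finset.sum_eq_single i₀]
    · have hsub : B.submatrix i₀.succAbove Fin.succ = 1 := by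
        ext r c
        rw [Matrix.submatrix_apply, hBcols]
        simp [Pi.single_apply, Matrix.one_apply, Fin.succAbove_right_injective.eq_iff, eq_comm]
      rw [hsub, Matrix.det_one, hBcol0, mul_one]
    · intro i _ hne
      obtain ⟨r₀, hr₀⟩ := Fin.exists_succAbove_eq hne.symm
      have hrow : (B.submatrix i.succAbove Fin.succ).det = 0 := by
        refine Matrix.det_eq_zero_of_row_eq_zero r₀ (fun c => ?_)
        rw [Matrix.submatrix_apply, hr₀, hBcols]
        exact Pi.single_eq_of_ne (Fin.succAbove_ne i₀ c).symm 1
      rw [hrow, mul_zero]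
    · intro h
      exact absurd (Finset.mem_univ i₀) h
  have hBu : IsUnit B.det := by
    rw [hdetB, isUnit_iff_ne_zero]
    intro hc
    rcases mul_eq_zero.1 hc with h | h
    · exact pow_ne_zero _ (by norm_num : (-1:ℝ) ≠ 0) h
    · exact hi₀ h
  have hBB : B⁻¹ * B = 1 := nonsing_inv_mul B hBu
  set e₀ : Fin (n+1) → ℝ := Pi.single 0 1 with he₀
  have e1 : B *ᵥ e₀ = v := by
    funext r
    simp [Matrix.mulVec, dotProduct, he₀, Pi.single_apply, hBcol0]
  have key : ∀ r, (B⁻¹ * A * B) r 0 = x • e₀ r := by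
    intro r
    have h1 : (B⁻¹ * A * B) *ᵥ e₀ = x • e₀ := by
      calc (B⁻¹ * A * B) *ᵥ e₀
          = B⁻¹ *ᵥ (A *ᵥ (B *ᵥ e₀)) := by
            rw [Matrix.mulVec_mulVec, Matrix.mulVec_mulVec]
        _ = B⁻¹ *ᵥ (x • v) := by rw [e1, hv]
        _ = x • (B⁻¹ *ᵥ (B *ᵥ e₀)) := by
            rw [e1, Matrix.mulVec_smul]
        _ = x • e₀ := by
            rw [Matrix.mulVec_mulVec, hBB, Matrix.one_mulVec]
    have h2 := congrFun h1 r
    rw [Matrix.mulVec, dotProduct] at h2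
    simpa [he₀, Pi.single_apply] using h2
  refine ⟨B, hBu, ?_, fun i => ?_⟩
  · have := key 0
    simpa [he₀] using this
  · have := key i.succ
    simpa [he₀, Fin.succ_ne_zero] using this

lemma charpoly_block {n : ℕ} (M : Matrix (Fin (n+1)) (Fin (n+1)) ℝ) (x : ℝ)
    (h0 : M 0 0 = x) (hs : ∀ i : Fin n, M i.succ 0 = 0) :
    M.charpoly = (X - C x) * (M.submatrix Fin.succ Fin.succ).charpoly := by
  rw [Matrix.charpoly, Matrix.charpoly, Matrix.det_succ_column_zero, Finset.sum_eq_single 0]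
  · have hsub : (charmatrix M).submatrix (Fin.succAbove 0) Fin.succ
        = charmatrix (M.submatrix Fin.succ Fin.succ) := by
      ext i j
      rw [Fin.succAbove_zero]
      by_cases h : i = j
      · subst h
        simp [Matrix.submatrix_apply, charmatrix_apply_eq]
      · rw [Matrix.submatrix_apply, charmatrix_apply_ne _ _ _ (fun hc => h (Fin.succ_injective _ hc)),
          charmatrix_apply_ne _ _ _ h, Matrix.submatrix_apply]
    rw [hsub, charmatrix_apply_eq, h0]
    simp
  · intro i _ hne
    obtain ⟨j, rfl⟩ := Fin.eq_succ_of_ne_zero hne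
    rw [charmatrix_apply_ne _ _ _ (Fin.succ_ne_zero j), hs, map_zero, neg_zero, mul_zero, zero_mul]
  · intro h
    exact absurd (Finset.mem_univ 0) h

lemma conj_block {n : ℕ} (M : Matrix (Fin (n+1)) (Fin (n+1)) ℝ) (R : Matrix (Fin n) (Fin n) ℝ)
    (hR : IsUnit R.det) (hs : ∀ i : Fin n, M i.succ 0 = 0) :
    ∃ E : Matrix (Fin (n+1)) (Fin (n+1)) ℝ, IsUnit E.det ∧
      (∀ i : Fin n, (E⁻¹ * M * E) i.succ 0 = 0) ∧
      (∀ i j : Fin n, (E⁻¹ * M * E) i.succ j.succ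
        = (R⁻¹ * (M.submatrix Fin.succ Fin.succ) * R) i j) := by
  have hRR : R * R⁻¹ = 1 := mul_nonsing_inv R hR
  have hRR' : R⁻¹ * R = 1 := nonsing_inv_mul R hR
  set E : Matrix (Fin (n+1)) (Fin (n+1)) ℝ :=
    Matrix.of (Fin.cons (Fin.cons 1 0) (fun i => Fin.cons 0 (R i))) with hE
  set E' : Matrix (Fin (n+1)) (Fin (n+1)) ℝ :=
    Matrix.of (Fin.cons (Fin.cons 1 0) (fun i => Fin.cons 0 (R⁻¹ i))) with hE'
  have hE00 : E 0 0 = 1 := rfl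
  have hE0s : ∀ j : Fin n, E 0 j.succ = 0 := fun j => by simp [hE]
  have hEs0 : ∀ i : Fin n, E i.succ 0 = 0 := fun i => by simp [hE]
  have hEss : ∀ i j : Fin n, E i.succ j.succ = R i j := fun i j => by simp [hE]
  have hF00 : E' 0 0 = 1 := rfl
  have hF0s : ∀ j : Fin n, E' 0 j.succ = 0 := fun j => by simp [hE']
  have hFs0 : ∀ i : Fin n, E' i.succ 0 = 0 := fun i => by simp [hE']
  have hFss : ∀ i j : Fin n, E' i.succ j.succ = R⁻¹ i j := fun i j => by simp [hE']
  have hEE' : E * E' = 1 := by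
    ext a b
    rw [Matrix.mul_apply, Fin.sum_univ_succ]
    refine Fin.cases ?_ (fun i => ?_) a <;> refine Fin.cases ?_ (fun j => ?_) b
    · simp [hE00, hF00, hE0s, hFs0, Matrix.one_apply]
    · simp [hE00, hF0s, hE0s, hFss, Matrix.one_apply, (Fin.succ_ne_zero j).symm]
    · simp [hEs0, hF00, hEss, hFs0, Matrix.one_apply, Fin.succ_ne_zero]
    · have := congrFun (congrFun hRR i) j
      rw [Matrix.mul_apply] at this
      simp only [hEs0, hF00, hEss, hFss, Matrix.one_apply, mul_one, zero_mul, zero_add]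
      rw [this]
      simp [Matrix.one_apply, Fin.succ_inj]
  have hE'E : E' * E = 1 := by
    ext a b
    rw [Matrix.mul_apply, Fin.sum_univ_succ]
    refine Fin.cases ?_ (fun i => ?_) a <;> refine Fin.cases ?_ (fun j => ?_) b
    · simp [hE00, hF00, hF0s, hEs0, Matrix.one_apply]
    · simp [hF00, hE0s, hF0s, hEss, Matrix.one_apply, (Fin.succ_ne_zero j).symm]
    · simp [hFs0, hE00, hFss, hEs0, Matrix.one_apply, Fin.succ_ne_zero]
    · have := congrFun (congrFun hRR' i) j
      rw [Matrix.mul_apply] at this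
      simp only [hFs0, hE00, hFss, hEss, Matrix.one_apply, mul_one, zero_mul, zero_add]
      rw [this]
      simp [Matrix.one_apply, Fin.succ_inj]
  have hEinv : E⁻¹ = E' := Matrix.inv_eq_right_inv hEE'
  have hEu : IsUnit E.det :=
    IsUnit.of_mul_eq_one E'.det (by rw [← Matrix.det_mul, hEE', Matrix.det_one])
  refine ⟨E, hEu, ?_, ?_⟩
  · intro i
    have h1 : (E' * M) i.succ 0 = 0 := by
      rw [Matrix.mul_apply, Fin.sum_univ_succ, hFs0]
      simp [hFss, hs]
    rw [hEinv, Matrix.mul_apply, Fin.sum_univ_succ, h1, hE00, mul_one, zero_add]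
    simp [hEs0]
  · intro i j
    have h2 : ∀ q : Fin n, (E' * M) i.succ q.succ
        = (R⁻¹ * M.submatrix Fin.succ Fin.succ) i q := by
      intro q
      rw [Matrix.mul_apply, Fin.sum_univ_succ, hFs0, Matrix.mul_apply]
      simp [hFss, Matrix.submatrix_apply]
    rw [hEinv, Matrix.mul_apply, Fin.sum_univ_succ, hE0s, mul_zero, zero_add,
      Matrix.mul_apply (M := R⁻¹ * M.submatrix Fin.succ Fin.succ) (N := R)]
    exact Finset.sum_congr rfl fun q _ => by rw [h2, hEss]


lemma exists_triangular : ∀ (n : ℕ) (A : Matrix (Fin n) (Fin n) ℝ), HasOnlyRealEigenvalues A →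
    ∃ Q : Matrix (Fin n) (Fin n) ℝ, IsUnit Q.det ∧
      (Q⁻¹ * A * Q).BlockTriangular (id : Fin n → Fin n) := by
  intro n
  induction n with
  | zero =>
    intro A _
    exact ⟨1, by simp, fun i j _ => i.elim0⟩
  | succ n ih =>
    intro A hA
    obtain ⟨x, v, hv0, hv⟩ := exists_real_eigenvector A hA
    obtain ⟨B, hBu, hB00, hBs0⟩ := exists_block_form A x v hv0 hv
    set M := B⁻¹ * A * B with hM
    set Cm := M.submatrix Fin.succ Fin.succ with hCm
    have hchar : M.charpoly = (X - C x) * Cm.charpoly := charpoly_block M x hB00 hBs0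
    have hMA : M.charpoly = A.charpoly := charpoly_similar B A hBu
    have hCA : HasOnlyRealEigenvalues Cm := by
      intro z hz
      apply hA z
      have : A.charpoly.map (algebraMap ℝ ℂ)
          = ((X - C x).map (algebraMap ℝ ℂ)) * (Cm.charpoly.map (algebraMap ℝ ℂ)) := by
        rw [← Polynomial.map_mul, ← hchar, hMA]
      rw [Polynomial.IsRoot, this, Polynomial.eval_mul, hz, mul_zero]
    obtain ⟨R, hRu, hRt⟩ := ih Cm hCA
    obtain ⟨E, hEu, hN0, hNss⟩ := conj_block M R hRu hBs0
    refine ⟨B * E, (by rw [Matrix.det_mul]; exact hBu.mul hEu), ?_⟩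
    have hQ : (B * E)⁻¹ * A * (B * E) = E⁻¹ * M * E := by
      rw [Matrix.mul_inv_rev, hM]
      simp only [Matrix.mul_assoc]
    rw [hQ]
    intro a b hab
    have ha : a ≠ 0 := by
      rintro rfl
      exact absurd hab (by simp)
    obtain ⟨i, rfl⟩ := Fin.eq_succ_of_ne_zero ha
    rcases Fin.eq_zero_or_eq_succ b with rfl | ⟨j, rfl⟩
    · exact hN0 i
    · rw [hNss i j]
      exact hRt (show (id j : Fin n) < id i by
        simpa [Fin.succ_lt_succ_iff] using hab)


lemma diag_conj_apply {m : ℕ} (c : Fin m → ℝ) (hc : ∀ i, c i ≠ 0)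
    (T : Matrix (Fin m) (Fin m) ℝ) (i j : Fin m) :
    ((Matrix.diagonal c)⁻¹ * T * Matrix.diagonal c) i j = (c i)⁻¹ * T i j * c j := by
  have hinv : (Matrix.diagonal c)⁻¹ = Matrix.diagonal (fun i => (c i)⁻¹) := by
    apply Matrix.inv_eq_right_inv
    rw [Matrix.diagonal_mul_diagonal]
    convert Matrix.diagonal_one
    rw [mul_inv_cancel₀ (hc _)]
  rw [hinv, Matrix.mul_diagonal, Matrix.diagonal_mul]

lemma tendsto_scaling {m : ℕ} (T : Matrix (Fin m) (Fin m) ℝ)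
    (hT : T.BlockTriangular (id : Fin m → Fin m)) :
    ∃ d : ℕ → Fin m → ℝ, (∀ k, ∏ i, d k i = 1) ∧
      Tendsto (fun k => (Matrix.diagonal (d k))⁻¹ * T * Matrix.diagonal (d k)) atTop
        (𝓝 (Matrix.diagonal (fun i => T i i))) := by
  set t : ℕ → ℝ := fun k => ((k : ℝ) + 1)⁻¹ with ht
  have htpos : ∀ k, 0 < t k := fun k => by positivity
  have htne : ∀ k, t k ≠ 0 := fun k => (htpos k).ne'
  have ht0 : Tendsto t atTop (𝓝 0) := by
    have := tendsto_one_div_add_atTop_nhds_zero_nat (𝕜 := ℝ)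
    simpa [ht, one_div] using this
  set d : ℕ → Fin m → ℝ := fun k i => (t k) ^ (2 * (i : ℕ)) / (t k) ^ (m - 1) with hd
  have hdne : ∀ k i, d k i ≠ 0 :=
    fun k i => div_ne_zero (pow_ne_zero _ (htne k)) (pow_ne_zero _ (htne k))
  refine ⟨d, fun k => ?_, ?_⟩
  · rw [hd, Finset.prod_div_distrib, Finset.prod_pow_eq_pow_sum, Finset.prod_const,
      ← pow_mul]
    rw [div_eq_one_iff_eq (pow_ne_zero _ (htne k))]
    congr 1
    rw [Fin.sum_univ_eq_sum_range (fun i => 2 * i) m, ← Finset.mul_sum, Finset.card_fin]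
    calc 2 * ∑ i ∈ Finset.range m, i = (∑ i ∈ Finset.range m, i) * 2 := mul_comm _ _
      _ = m * (m - 1) := Finset.sum_range_id_mul_two m
      _ = (m - 1) * m := mul_comm _ _
  · refine tendsto_pi_nhds.2 ?_
    intro i
    rw [tendsto_pi_nhds]
    intro j
    have hentry : ∀ k, ((Matrix.diagonal (d k))⁻¹ * T * Matrix.diagonal (d k)) i j
        = (d k i)⁻¹ * T i j * d k j := fun k => diag_conj_apply (d k) (hdne k) T i j
    simp only [hentry]
    rcases lt_trichotomy i j with hij | rfl | hij
    · obtain ⟨c, hc⟩ : ∃ c, (j : ℕ) = (i : ℕ) + c := ⟨(j:ℕ) - i, by omega⟩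
      have hc1 : c ≠ 0 := by
        intro h
        rw [h] at hc
        exact absurd (Fin.ext (by omega) : i = j) hij.ne
      have heq : ∀ k, (d k i)⁻¹ * T i j * d k j = T i j * (t k) ^ (2 * c) := by
        intro k
        rw [hd]
        simp only
        rw [hc, mul_add, pow_add]
        field_simp [htne k]
      simp only [heq]
      have : Tendsto (fun k => T i j * (t k) ^ (2 * c)) atTop (𝓝 (T i j * 0 ^ (2 * c))) :=
        ((ht0.pow (2 * c)).const_mul _)
      rw [Matrix.diagonal_apply_ne _ hij.ne]
      simpa [zero_pow (by omega : 2 * c ≠ 0)] using this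
    · have heq : ∀ k, (d k i)⁻¹ * T i i * d k i = T i i := by
        intro k
        field_simp [hdne k i]
      simp only [heq, Matrix.diagonal_apply_eq]
      exact tendsto_const_nhds
    · have hTz : T i j = 0 := hT (by simpa using hij)
      simp [hTz, Matrix.diagonal_apply_ne _ (hij.ne' : i ≠ j)]


theorem stmt_16 (m : ℕ) (A : Matrix (Fin m) (Fin m) ℝ) :
    (∃ P : ℕ → Matrix (Fin m) (Fin m) ℝ, (∀ k, (P k).det = 1) ∧
      ∃ D : Matrix (Fin m) (Fin m) ℝ, D.IsDiag ∧
        Tendsto (fun k => (P k)⁻¹ * A * P k) atTop (𝓝 D)) ↔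
    HasOnlyRealEigenvalues A := by
  constructor
  · rintro ⟨P, hPdet, D, hDdiag, hlim⟩ z hz
    have hPu : ∀ k, IsUnit (P k).det := fun k => by rw [hPdet k]; exact isUnit_one
    have key : A.charpoly = D.charpoly := by
      apply Polynomial.funext
      intro x
      have hcont : Continuous fun M : Matrix (Fin m) (Fin m) ℝ =>
          (x • (1 : Matrix (Fin m) (Fin m) ℝ) - M).det :=
        (continuous_const.sub continuous_id).matrix_det
      have h1 : Tendsto (fun k => (x • (1 : Matrix (Fin m) (Fin m) ℝ)
          - ((P k)⁻¹ * A * P k)).det) atTop (𝓝 ((x • 1 - D).det)) :=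
        (hcont.tendsto D).comp hlim
      have h2 : ∀ k, (x • (1 : Matrix (Fin m) (Fin m) ℝ) - ((P k)⁻¹ * A * P k)).det
          = A.charpoly.eval x := by
        intro k
        rw [← eval_charpoly', charpoly_similar _ _ (hPu k)]
      rw [show (fun k => (x • (1 : Matrix (Fin m) (Fin m) ℝ)
          - ((P k)⁻¹ * A * P k)).det) = fun _ => A.charpoly.eval x from funext h2] at h1
      have h4 := tendsto_nhds_unique h1 tendsto_const_nhds
      rw [eval_charpoly' D x]
      exact h4.symm
    have hDtri : D.BlockTriangular (id : Fin m → Fin m) := fun i j h => hDdiag h.ne'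
    have hDchar : D.charpoly = ∏ i, (X - C (D i i)) :=
      Matrix.charpoly_of_upperTriangular D hDtri
    have hprod : ∏ i, (z - ((D i i : ℝ) : ℂ)) = 0 := by
      have := hz
      rw [Polynomial.IsRoot, key, hDchar, Polynomial.map_prod] at this
      simpa [Polynomial.eval_prod] using this
    obtain ⟨i, -, hzi⟩ := Finset.prod_eq_zero_iff.1 hprod
    rw [sub_eq_zero.1 hzi]
    simp
  · intro hA
    obtain ⟨Q, hQu, hQt⟩ := exists_triangular m A hA
    rcases Nat.eq_zero_or_pos m with rfl | hm
    · refine ⟨fun _ => 1, fun k => Matrix.det_fin_zero, A, fun i => i.elim0, ?_⟩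
      have : (fun k : ℕ => (1 : Matrix (Fin 0) (Fin 0) ℝ)⁻¹ * A * 1) = fun _ => A := by
        funext k
        simp
      rw [this]
      exact tendsto_const_nhds
    · -- normalize Q to determinant 1
      set i₁ : Fin m := ⟨0, hm⟩ with hi₁
      set c : Fin m → ℝ := Function.update (fun _ => (1:ℝ)) i₁ (Q.det)⁻¹ with hc
      have hcne : ∀ i, c i ≠ 0 := by
        intro i
        rw [hc]
        rcases eq_or_ne i i₁ with rfl | h
        · simp [inv_ne_zero hQu.ne_zero]
        · simp [Function.update_of_ne h]
      have hprodc : ∏ i, c i = (Q.det)⁻¹ := by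
        rw [hc, Finset.prod_update_of_mem (Finset.mem_univ i₁)]
        simp
      set Q' : Matrix (Fin m) (Fin m) ℝ := Q * Matrix.diagonal c with hQ'
      have hdetQ' : Q'.det = 1 := by
        rw [hQ', Matrix.det_mul, Matrix.det_diagonal, hprodc,
          mul_inv_cancel₀ hQu.ne_zero]
      have hQ'u : IsUnit Q'.det := by rw [hdetQ']; exact isUnit_one
      set T := Q'⁻¹ * A * Q' with hT
      have hTeq : T = (Matrix.diagonal c)⁻¹ * (Q⁻¹ * A * Q) * Matrix.diagonal c := by
        rw [hT, hQ', Matrix.mul_inv_rev]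
        simp only [Matrix.mul_assoc]
      have hTtri : T.BlockTriangular (id : Fin m → Fin m) := by
        intro i j hij
        rw [hTeq, diag_conj_apply c hcne, hQt hij, mul_zero, zero_mul]
      obtain ⟨d, hd1, hdlim⟩ := tendsto_scaling T hTtri
      refine ⟨fun k => Q' * Matrix.diagonal (d k), fun k => ?_,
        Matrix.diagonal (fun i => T i i), Matrix.isDiag_diagonal _, ?_⟩
      · rw [Matrix.det_mul, hdetQ', Matrix.det_diagonal, hd1, one_mul]
      · have : (fun k => (Q' * Matrix.diagonal (d k))⁻¹ * A * (Q' * Matrix.diagonal (d k)))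
            = fun k => (Matrix.diagonal (d k))⁻¹ * T * Matrix.diagonal (d k) := by
          funext k
          rw [Matrix.mul_inv_rev, hT]
          simp only [Matrix.mul_assoc]
        rw [this]
        exact hdlim
end

section
/- Let A be a real symmetric m×m matrix and let (P_k) be a sequence of invertible matrices in ℝ^{m×m} such that every off-diagonal entry of P_k⁻¹ A P_k tends to 0 as k → ∞. Then the diagonal entries of P_k⁻¹ A P_k are uniformly bounded in k. -/
set_option maxHeartbeats 1000000


open Matrix Filter Topology

theorem stmt_18 (m : ℕ) (A : Matrix (Fin m) (Fin m) ℝ) (hA : A.IsSymm)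
    (P : ℕ → Matrix (Fin m) (Fin m) ℝ) (hinv : ∀ k, IsUnit (P k).det)
    (hoff : ∀ p q : Fin m, p ≠ q →
      Tendsto (fun k => ((P k)⁻¹ * A * P k) p q) atTop (𝓝 (0 : ℝ))) :
    ∃ M : ℝ, ∀ k, ∀ i : Fin m, |((P k)⁻¹ * A * P k) i i| ≤ M := by
  set B : ℕ → Matrix (Fin m) (Fin m) ℝ := fun k => (P k)⁻¹ * A * P k with hB
  -- trace of B k * B k is constant
  have htr : ∀ k, (B k * B k).trace = (A * A).trace := by
    intro k
    have h1 : B k * B k = (P k)⁻¹ * (A * A * P k) := by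
      simp only [hB]
      rw [show (P k)⁻¹ * A * P k * ((P k)⁻¹ * A * P k)
          = (P k)⁻¹ * A * (P k * (P k)⁻¹) * A * P k by
            simp only [Matrix.mul_assoc]]
      rw [Matrix.mul_nonsing_inv _ (hinv k)]
      simp only [Matrix.mul_one, Matrix.mul_assoc]
    rw [h1, Matrix.trace_mul_comm, Matrix.mul_assoc,
      Matrix.mul_nonsing_inv _ (hinv k), Matrix.mul_one]
  -- off-diagonal contribution tends to 0
  have hs : Tendsto (fun k => ∑ i : Fin m, ∑ j ∈ Finset.univ.erase i,
      B k i j * B k j i) atTop (𝓝 0) := by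
    have : Tendsto (fun k => ∑ i : Fin m, ∑ j ∈ Finset.univ.erase i,
        B k i j * B k j i) atTop (𝓝 (∑ i : Fin m, ∑ j ∈ Finset.univ.erase i, (0:ℝ))) := by
      apply tendsto_finset_sum
      intro i _
      apply tendsto_finset_sum
      intro j hj
      have hji : j ≠ i := Finset.ne_of_mem_erase hj
      have := (hoff i j hji.symm).mul (hoff j i hji)
      simpa using this
    simpa using this
  -- sum of squares of diagonal entries
  have hdiag : ∀ k, ∑ i : Fin m, (B k i i)^2
      = (A * A).trace - ∑ i : Fin m, ∑ j ∈ Finset.univ.erase i, B k i j * B k j i := by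
    intro k
    rw [← htr k, Matrix.trace]
    have : ∀ i : Fin m, (B k * B k).diag i
        = (B k i i)^2 + ∑ j ∈ Finset.univ.erase i, B k i j * B k j i := by
      intro i
      rw [Matrix.diag, Matrix.mul_apply, ← Finset.add_sum_erase _ _ (Finset.mem_univ i)]
      ring_nf
    rw [Finset.sum_congr rfl (fun i _ => this i), Finset.sum_add_distrib]
    ring
  have hconv : Tendsto (fun k => ∑ i : Fin m, (B k i i)^2) atTop (𝓝 ((A*A).trace - 0)) := by
    simp only [hdiag]
    exact tendsto_const_nhds.sub hs
  obtain ⟨M, hM⟩ := hconv.bddAbove_range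
  refine ⟨Real.sqrt M, fun k i => ?_⟩
  apply Real.abs_le_sqrt
  calc (B k i i)^2 ≤ ∑ j : Fin m, (B k j j)^2 :=
        Finset.single_le_sum (f := fun j => B k j j ^ 2) (fun j _ => sq_nonneg _) (Finset.mem_univ i)
    _ ≤ M := hM ⟨k, rfl⟩
end

section
/- Let m ≥ 1 and define the real m×m matrices E(m) and F(m) by E(m)_{ij} = 1 if i + j = m + 1 and E(m)_{ij} = 0 otherwise, and F(m)_{ij} = 1 if i + j = m + 2 with i ≥ 2 and j ≥ 2, and F(m)_{ij} = 0 otherwise. Then the pair {E(m), F(m)} is TWSD-B. -/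
open Matrix Filter Topology

lemma prod_rpow_sum' {ι : Type*} (s : Finset ι) {x : ℝ} (hx : 0 < x) (f : ι → ℝ) :
    ∏ a ∈ s, x ^ f a = x ^ (∑ a ∈ s, f a) := by
  classical
  induction s using Finset.induction_on with
  | empty => simp
  | insert _ _ h ih =>
      rw [Finset.prod_insert h, Finset.sum_insert h, Real.rpow_add hx, ih]

lemma exists_congr_diag {m : ℕ} [NeZero m] {E : Matrix (Fin m) (Fin m) ℝ}
    (hE : E.IsHermitian) :
    ∃ S : Matrix (Fin m) (Fin m) ℝ, S.det = 1 ∧ (Sᵀ * E * S).IsDiag := by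
  set U : Matrix (Fin m) (Fin m) ℝ := (hE.eigenvectorUnitary : Matrix (Fin m) (Fin m) ℝ)
    with hUdef
  have h1 : U * star U = 1 := (Matrix.mem_unitaryGroup_iff).mp hE.eigenvectorUnitary.2
  have h2 : star U * U = 1 := (Matrix.mem_unitaryGroup_iff').mp hE.eigenvectorUnitary.2
  have hstar : star U = Uᵀ := by
    rw [Matrix.star_eq_conjTranspose, Matrix.conjTranspose_eq_transpose_of_trivial]
  set g : Fin m → ℝ := RCLike.ofReal ∘ hE.eigenvalues with hg
  have hdiag : Uᵀ * E * U = diagonal g := by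
    rw [← hstar]
    conv_lhs => rw [hE.spectral_theorem]
    calc star U * (U * diagonal g * star U) * U
        = (star U * U) * (diagonal g * (star U * U)) := by
          simp only [Matrix.mul_assoc]
      _ = diagonal g := by rw [h2, one_mul, mul_one]
  have hdet2 : U.det * U.det = 1 := by
    have := congrArg Matrix.det h2
    rwa [Matrix.det_mul, Matrix.det_one, hstar, Matrix.det_transpose] at this
  set c : Fin m → ℝ := fun a => if a = (0 : Fin m) then U.det else 1 with hc
  refine ⟨U * diagonal c, ?_, ?_⟩
  · rw [Matrix.det_mul, Matrix.det_diagonal]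
    rw [hc]
    rw [Finset.prod_ite_eq' Finset.univ (0 : Fin m) (fun _ => U.det)]
    simpa using hdet2
  · have : (U * diagonal c)ᵀ * E * (U * diagonal c)
        = diagonal c * (Uᵀ * E * U) * diagonal c := by
      simp only [Matrix.transpose_mul, Matrix.diagonal_transpose, Matrix.mul_assoc]
    rw [this, hdiag, Matrix.diagonal_mul_diagonal, Matrix.diagonal_mul_diagonal]
    exact Matrix.isDiag_diagonal _

def TWSDB {ι : Type*} {m : ℕ} (A : ι → Matrix (Fin m) (Fin m) ℝ) : Prop :=
  ∃ P : ℕ → Matrix (Fin m) (Fin m) ℝ,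
    (∀ k, (P k).det = 1) ∧
    ∃ D : ι → Matrix (Fin m) (Fin m) ℝ, (∀ i, (D i).IsDiag) ∧
      ∀ i, Tendsto (fun k => (P k)ᵀ * A i * P k) atTop (𝓝 (D i))

theorem stmt_19 (m : ℕ) (hm : 1 ≤ m)
    (E F : Matrix (Fin m) (Fin m) ℝ)
    (hE : ∀ i j : Fin m,
      E i j = if (i : ℕ) + 1 + ((j : ℕ) + 1) = m + 1 then 1 else 0)
    (hF : ∀ i j : Fin m,
      F i j = if (i : ℕ) + 1 + ((j : ℕ) + 1) = m + 2 ∧ 2 ≤ (i : ℕ) + 1 ∧ 2 ≤ (j : ℕ) + 1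
        then 1 else 0) :
    TWSDB ![E, F] := by
  haveI : NeZero m := ⟨by omega⟩
  -- E is symmetric
  have hEherm : E.IsHermitian := by
    ext i j
    rw [Matrix.conjTranspose_apply, star_trivial, hE, hE]
    split_ifs with h1 h2 h2 <;> first | rfl | omega
  obtain ⟨S, hSdet, hSdiag⟩ := exists_congr_diag hEherm
  -- the scaling exponents
  set w : Fin m → ℝ := fun a => (a : ℝ) - ((m : ℝ) - 1) / 2 with hw
  set ε : ℕ → ℝ := fun k => ((k : ℝ) + 1)⁻¹ with hεdef
  have hεpos : ∀ k, 0 < ε k := by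
    intro k
    have : (0:ℝ) < (k:ℝ) + 1 := by positivity
    exact inv_pos.mpr this
  set d : ℕ → Fin m → ℝ := fun k a => ε k ^ w a with hd
  have hsumw : ∑ a : Fin m, w a = 0 := by
    have hs : ∑ a : Fin m, ((a : ℕ) : ℝ) = (m : ℝ) * ((m : ℝ) - 1) / 2 := by
      rw [Fin.sum_univ_eq_sum_range (fun i => ((i : ℕ) : ℝ)) m, ← Nat.cast_sum]
      have h2 : (∑ i ∈ Finset.range m, i) * 2 = m * (m - 1) := Finset.sum_range_id_mul_two m
      have h3 := congrArg (fun n : ℕ => (n : ℝ)) h2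
      simp only [Nat.cast_mul, Nat.cast_ofNat, Nat.cast_sub hm, Nat.cast_one] at h3
      linarith [h3]
    simp only [hw, Finset.sum_sub_distrib, hs, Finset.sum_const, Finset.card_univ,
      Fintype.card_fin, nsmul_eq_mul]
    ring
  have hDdet : ∀ k, (Matrix.diagonal (d k)).det = 1 := by
    intro k
    rw [Matrix.det_diagonal, hd]
    simp only []
    rw [prod_rpow_sum' Finset.univ (hεpos k) w, hsumw, Real.rpow_zero]
  have hrpow : ∀ (k : ℕ) (i j : Fin m), d k i * d k j = ε k ^ (w i + w j) := by
    intro k i j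
    rw [hd]
    exact (Real.rpow_add (hεpos k) _ _).symm
  have hDE : ∀ k, Matrix.diagonal (d k) * E * Matrix.diagonal (d k) = E := by
    intro k
    ext i j
    rw [Matrix.mul_diagonal, Matrix.diagonal_mul, hE]
    split_ifs with h
    · have hc := congrArg (fun n : ℕ => (n : ℝ)) h
      push_cast at hc
      have hw0 : w i + w j = 0 := by simp only [hw]; linarith [hc]
      rw [mul_one, hrpow k i j, hw0, Real.rpow_zero]
    · ring
  have hDF : ∀ k, Matrix.diagonal (d k) * F * Matrix.diagonal (d k) = ε k • F := by
    intro k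
    ext i j
    rw [Matrix.smul_apply, Matrix.mul_diagonal, Matrix.diagonal_mul, hF, smul_eq_mul]
    split_ifs with h
    · have hc := congrArg (fun n : ℕ => (n : ℝ)) h.1
      push_cast at hc
      have hw1 : w i + w j = 1 := by simp only [hw]; linarith [hc]
      rw [mul_one, mul_one, hrpow k i j, hw1, Real.rpow_one]
    · ring
  refine ⟨fun k => Matrix.diagonal (d k) * S, ?_, ![Sᵀ * E * S, 0], ?_, ?_⟩
  · intro k
    rw [Matrix.det_mul, hDdet, hSdet, one_mul]
  · intro i
    fin_cases i
    · simp only [Fin.isValue, Matrix.cons_val_zero]; exact hSdiag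
    · simp only [Fin.isValue, Matrix.cons_val_one, Matrix.head_cons]; exact Matrix.isDiag_zero
  · have hkey : ∀ (k : ℕ) (X : Matrix (Fin m) (Fin m) ℝ),
        (Matrix.diagonal (d k) * S)ᵀ * X * (Matrix.diagonal (d k) * S)
          = Sᵀ * (Matrix.diagonal (d k) * X * Matrix.diagonal (d k)) * S := by
      intro k X
      simp only [Matrix.transpose_mul, Matrix.diagonal_transpose, Matrix.mul_assoc]
    intro i
    fin_cases i
    · have hc : ∀ k, (Matrix.diagonal (d k) * S)ᵀ * E * (Matrix.diagonal (d k) * S)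
          = Sᵀ * E * S := by
        intro k; rw [hkey, hDE]
      simp only [Fin.isValue, Matrix.cons_val_zero]
      exact Tendsto.congr (fun k => (hc k).symm) tendsto_const_nhds
    · have hc : ∀ k, (Matrix.diagonal (d k) * S)ᵀ * F * (Matrix.diagonal (d k) * S)
          = ε k • (Sᵀ * F * S) := by
        intro k
        rw [hkey, hDF, Matrix.mul_smul, Matrix.smul_mul]
      have hε0 : Tendsto ε atTop (𝓝 0) := by
        simpa [hεdef, one_div] using tendsto_one_div_add_atTop_nhds_zero_nat (𝕜 := ℝ)
      have hT : Tendsto (fun k => ε k • (Sᵀ * F * S)) atTop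
          (𝓝 ((0 : ℝ) • (Sᵀ * F * S))) := hε0.smul_const _
      rw [zero_smul] at hT
      simp only [Fin.isValue, Matrix.cons_val_one, Matrix.head_cons]
      exact Tendsto.congr (fun k => (hc k).symm) hT
end
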